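/- If E is a clan, then the category E^(1), whose objects are the fibrations of E and whose morphisms a → b are commutative squares (f₀, f₁) with f₁∘a = b∘f₀, is a clan in which the fibrations are the Reedy fibrations, i.e. the morphisms whose underlying commutative square is Reedy fibrant; moreover the inclusion functor E^(1) → E^[1] into the clan of all arrows of E equipped with pointwise fibrations is a morphism of clans. -/

import Mathlib

open CategoryTheory CategoryTheory.Limits

universe w v u v' u' v'' u''

/-- A *clan* structure on a category `E`: a terminal object together with a class of
maps (the *fibrations*) containing the isomorphisms, closed under composition and
base changes (every fibration is carrable and any pullback of a fibration is a
fibration), and containing every map to the terminal object. -/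
structure Clan (E : Type u) [Category.{v} E] where
  fib : MorphismProperty E
  one : E
  one_isTerminal : IsTerminal one
  fib_of_isIso : ∀ ⦃A B : E⦄ (f : A ⟶ B), IsIso f → fib f
  fib_comp : ∀ ⦃A B C : E⦄ {f : A ⟶ B} {g : B ⟶ C}, fib f → fib g → fib (f ≫ g)
  carrable : ∀ ⦃A B X : E⦄ (f : A ⟶ B) ⦃p : X ⟶ B⦄, fib p →
    ∃ (P : E) (p₁ : P ⟶ A) (p₂ : P ⟶ X), IsPullback p₁ p₂ f p
  fib_baseChange : ∀ ⦃P A X B : E⦄ {p₁ : P ⟶ A} {p₂ : P ⟶ X} {f : A ⟶ B} {p : X ⟶ B},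
    IsPullback p₁ p₂ f p → fib p → fib p₁
  fib_toOne : ∀ X : E, fib (one_isTerminal.from X)

/-- A *morphism of clans* is a functor taking fibrations to fibrations, preserving
base changes of fibrations, and taking the terminal object to a terminal object. -/
structure IsClanMorphism {E : Type u} {E' : Type u'} [Category.{v} E] [Category.{v'} E']
    (C : Clan E) (D : Clan E') (F : E ⥤ E') : Prop where
  map_fib : ∀ ⦃A B : E⦄ (f : A ⟶ B), C.fib f → D.fib (F.map f)
  map_isPullback : ∀ ⦃P A X B : E⦄ {p₁ : P ⟶ A} {p₂ : P ⟶ X} {f : A ⟶ B} {p : X ⟶ B},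
    IsPullback p₁ p₂ f p → C.fib p →
      IsPullback (F.map p₁) (F.map p₂) (F.map f) (F.map p)
  preserves_terminal : Nonempty (IsTerminal (F.obj C.one))

/-- The local category `E(A)`: the full subcategory of `Over A` spanned by the
fibrations `X ↠ A`. -/
abbrev ClanSlice {E : Type u} [Category.{v} E] (C : Clan E) (A : E) :=
  ObjectProperty.FullSubcategory (fun X : Over A => C.fib X.hom)

/-- The underlying morphism of `Over A` of a morphism of `ClanSlice C A`. -/
def ClanSlice.homOf {E : Type u} [Category.{v} E] {C : Clan E} {A : E}
    {X Y : ClanSlice C A} (u : X ⟶ Y) : X.obj ⟶ Y.obj := u.hom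

/-- A commutative square with horizontal maps `f₀ : A₀ ⟶ B₀`, `f₁ : A₁ ⟶ B₁` and
vertical maps `a : A₀ ⟶ A₁`, `b : B₀ ⟶ B₁` is *Reedy fibrant* if `f₁` and `b` are
fibrations and the gap map `(a, f₀) : A₀ ⟶ A₁ ×_{B₁} B₀` into the pullback of `b`
along `f₁` is a fibration. -/
def ReedyFibrantSq {E : Type u} [Category.{v} E] (C : Clan E)
    {A₀ A₁ B₀ B₁ : E} (f₀ : A₀ ⟶ B₀) (f₁ : A₁ ⟶ B₁) (a : A₀ ⟶ A₁) (b : B₀ ⟶ B₁) : Prop :=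
  C.fib f₁ ∧ C.fib b ∧
    ∀ ⦃P : E⦄ (p₁ : P ⟶ A₁) (p₂ : P ⟶ B₀), IsPullback p₁ p₂ f₁ b →
      ∀ g : A₀ ⟶ P, g ≫ p₁ = a → g ≫ p₂ = f₀ → C.fib g

/-- The category `E^(1)`: the full subcategory of the arrow category of `E` spanned
by the fibrations of the clan `C`. -/
abbrev FibArrow {E : Type u} [Category.{v} E] (C : Clan E) :=
  ObjectProperty.FullSubcategory (fun f : Arrow E => C.fib f.hom)

/-- The underlying morphism of arrows of a morphism of `FibArrow C`. -/
def FibArrow.homOf {E : Type u} [Category.{v} E] {C : Clan E}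
    {X Y : FibArrow C} (u : X ⟶ Y) : X.obj ⟶ Y.obj := u.hom

namespace ClanAux

section generalCat
variable {D : Type u'} [Category.{v'} D]

/-- Precomposing both legs of a pullback with an isomorphism. -/
lemma isPullback_precomp_iso {Q P X Y Z : D} {fst : P ⟶ X} {snd : P ⟶ Y} {f : X ⟶ Z} {g : Y ⟶ Z}
    (h : IsPullback fst snd f g) (φ : Q ⟶ P) [IsIso φ] :
    IsPullback (φ ≫ fst) (φ ≫ snd) f g := by
  have s : IsPullback φ (φ ≫ snd) snd (𝟙 _) := IsPullback.of_horiz_isIso ⟨by simp⟩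
  simpa using s.paste_horiz h

/-- Shifting the first leg of a pullback across an isomorphism of the corner. -/
lemma isPullback_shift {P X X' Y Z : D} {fst : P ⟶ X} {snd : P ⟶ Y} {f : X ⟶ Z} {g : Y ⟶ Z}
    (h : IsPullback fst snd f g) (ψ : X ≅ X') :
    IsPullback (fst ≫ ψ.hom) snd (ψ.inv ≫ f) g := by
  have t : IsPullback ψ.hom f (ψ.inv ≫ f) (𝟙 _) := IsPullback.of_horiz_isIso ⟨by simp⟩
  simpa using h.paste_horiz t

end generalCat

variable {E : Type u} [Category.{v} E] (C : Clan E)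

lemma fib_iso_comp {A B X : E} (e : A ⟶ B) (f : B ⟶ X) (he : IsIso e) (hf : C.fib f) :
    C.fib (e ≫ f) := C.fib_comp (C.fib_of_isIso e he) hf

lemma fib_comp_iso {A B X : E} (f : A ⟶ B) (e : B ⟶ X) (he : IsIso e) (hf : C.fib f) :
    C.fib (f ≫ e) := C.fib_comp hf (C.fib_of_isIso e he)

/-- Transfer fibrancy of gap maps between two pullbacks of the same cospan. -/
lemma fib_transfer {A P Q X Y Z : E} {p₁ : P ⟶ X} {p₂ : P ⟶ Y} {q₁ : Q ⟶ X} {q₂ : Q ⟶ Y}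
    {f : X ⟶ Z} {g : Y ⟶ Z}
    (hP : IsPullback p₁ p₂ f g) (hQ : IsPullback q₁ q₂ f g)
    {u : A ⟶ P} {v : A ⟶ Q} (h₁ : u ≫ p₁ = v ≫ q₁) (h₂ : u ≫ p₂ = v ≫ q₂)
    (hu : C.fib u) : C.fib v := by
  have hv : v = u ≫ (hP.isoIsPullback _ _ hQ).hom := by
    apply hQ.hom_ext
    · rw [Category.assoc, IsPullback.isoIsPullback_hom_fst, h₁]
    · rw [Category.assoc, IsPullback.isoIsPullback_hom_snd, h₂]
  rw [hv]
  exact fib_comp_iso C u _ inferInstance hu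

lemma reedy_of_witness {A₀ A₁ B₀ B₁ : E} {f₀ : A₀ ⟶ B₀} {f₁ : A₁ ⟶ B₁} {a : A₀ ⟶ A₁}
    {b : B₀ ⟶ B₁} (hf₁ : C.fib f₁) (hb : C.fib b)
    {P : E} {p₁ : P ⟶ A₁} {p₂ : P ⟶ B₀} (hP : IsPullback p₁ p₂ f₁ b)
    {g : A₀ ⟶ P} (hg₁ : g ≫ p₁ = a) (hg₂ : g ≫ p₂ = f₀) (hg : C.fib g) :
    ReedyFibrantSq C f₀ f₁ a b := by
  refine ⟨hf₁, hb, fun Q q₁ q₂ hQ g' hg'₁ hg'₂ => ?_⟩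
  exact fib_transfer C hP hQ (by rw [hg₁, hg'₁]) (by rw [hg₂, hg'₂]) hg

lemma arrow_isIso_left {f g : Arrow E} (uu : f ⟶ g) (h : IsIso uu) : IsIso uu.left := by
  refine ⟨(inv uu).left, ?_, ?_⟩
  · rw [← Arrow.comp_left, IsIso.hom_inv_id]; simp
  · rw [← Arrow.comp_left, IsIso.inv_hom_id]; simp

lemma arrow_isIso_right {f g : Arrow E} (uu : f ⟶ g) (h : IsIso uu) : IsIso uu.right := by
  refine ⟨(inv uu).right, ?_, ?_⟩
  · rw [← Arrow.comp_right, IsIso.hom_inv_id]; simp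
  · rw [← Arrow.comp_right, IsIso.inv_hom_id]; simp

/-- A commutative square in the arrow category which is a pullback in each component is
a pullback. -/
lemma arrow_isPullback {P x y z : Arrow E} {pr : P ⟶ y} {pi : P ⟶ x} {v : y ⟶ z} {u : x ⟶ z}
    (w : pr ≫ v = pi ≫ u)
    (hL : IsPullback pr.left pi.left v.left u.left)
    (hR : IsPullback pr.right pi.right v.right u.right) :
    IsPullback pr pi v u := by
  refine IsPullback.of_isLimit' ⟨w⟩ (PullbackCone.IsLimit.mk _ ?_ ?_ ?_ ?_)
  · intro s
    refine Arrow.homMk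
      (u := hL.lift s.fst.left s.snd.left
        (by rw [← Arrow.comp_left, ← Arrow.comp_left, s.condition]))
      (v := hR.lift s.fst.right s.snd.right
        (by rw [← Arrow.comp_right, ← Arrow.comp_right, s.condition])) ?_
    apply hR.hom_ext
    · rw [Category.assoc, Category.assoc, ← Arrow.w pr, IsPullback.lift_fst_assoc,
        Arrow.w s.fst, IsPullback.lift_fst]
    · rw [Category.assoc, Category.assoc, ← Arrow.w pi, IsPullback.lift_snd_assoc,
        Arrow.w s.snd, IsPullback.lift_snd]
  · intro s
    apply Arrow.hom_ext <;> simp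
  · intro s
    apply Arrow.hom_ext <;> simp
  · intro s m hm₁ hm₂
    have hl₁ := congrArg Arrow.Hom.left hm₁
    have hl₂ := congrArg Arrow.Hom.left hm₂
    have hr₁ := congrArg Arrow.Hom.right hm₁
    have hr₂ := congrArg Arrow.Hom.right hm₂
    simp only [Arrow.comp_left, Arrow.comp_right] at hl₁ hl₂ hr₁ hr₂
    apply Arrow.hom_ext
    · apply hL.hom_ext
      · simp only [Arrow.homMk_left, IsPullback.lift_fst]; exact hl₁
      · simp only [Arrow.homMk_left, IsPullback.lift_snd]; exact hl₂
    · apply hR.hom_ext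
      · simp only [Arrow.homMk_right, IsPullback.lift_fst]; exact hr₁
      · simp only [Arrow.homMk_right, IsPullback.lift_snd]; exact hr₂

/-- The identity on the terminal object is terminal in the arrow category. -/
def arrowOneTerminal : IsTerminal (Arrow.mk (𝟙 C.one)) :=
  IsTerminal.ofUniqueHom
    (fun f => Arrow.homMk (u := C.one_isTerminal.from f.left)
      (v := C.one_isTerminal.from f.right) (C.one_isTerminal.hom_ext _ _))
    (fun f m => Arrow.hom_ext _ _ (C.one_isTerminal.hom_ext _ _) (C.one_isTerminal.hom_ext _ _))

end ClanAux

namespace ClanAux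

variable {E : Type u} [Category.{v} E] (C : Clan E)

/-- Pointwise pullbacks in the arrow category. -/
lemma cp_pullback {x y z : Arrow E} (v : y ⟶ z) (u : x ⟶ z)
    (hu1 : C.fib u.left) (hu2 : C.fib u.right) :
    ∃ (P : Arrow E) (pr : P ⟶ y) (pi : P ⟶ x),
      IsPullback pr pi v u ∧ C.fib pr.left ∧ C.fib pr.right := by
  obtain ⟨P₀, a₀, b₀, h₀⟩ := C.carrable v.left hu1
  obtain ⟨P₁, a₁, b₁, h₁⟩ := C.carrable v.right hu2
  have wph : (a₀ ≫ y.hom) ≫ v.right = (b₀ ≫ x.hom) ≫ u.right := by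
    rw [Category.assoc, ← Arrow.w v, ← Category.assoc, h₀.w, Category.assoc, Arrow.w u,
      ← Category.assoc]
  refine ⟨Arrow.mk (h₁.lift (a₀ ≫ y.hom) (b₀ ≫ x.hom) wph),
    Arrow.homMk (u := a₀) (v := a₁) (h₁.lift_fst _ _ _).symm,
    Arrow.homMk (u := b₀) (v := b₁) (h₁.lift_snd _ _ _).symm, ?_, ?_, ?_⟩
  · refine arrow_isPullback ?_ ?_ ?_
    · apply Arrow.hom_ext
      · simpa using h₀.w
      · simpa using h₁.w
    · exact h₀
    · exact h₁
  · exact C.fib_baseChange h₀ hu1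
  · exact C.fib_baseChange h₁ hu2

/-- The pointwise clan structure on the arrow category. -/
def CP : Clan (Arrow E) where
  fib := fun {f g} uu => C.fib uu.left ∧ C.fib uu.right
  one := Arrow.mk (𝟙 C.one)
  one_isTerminal := arrowOneTerminal C
  fib_of_isIso := fun {f g} uu h =>
    ⟨C.fib_of_isIso _ (arrow_isIso_left uu h), C.fib_of_isIso _ (arrow_isIso_right uu h)⟩
  fib_comp := fun {a b c} {uu vv} h₁ h₂ =>
    ⟨C.fib_comp h₁.1 h₂.1, C.fib_comp h₁.2 h₂.2⟩
  carrable := fun {a b x} f p hp => by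
    obtain ⟨P, pr, pi, hPB, _, _⟩ := cp_pullback C f p hp.1 hp.2
    exact ⟨P, pr, pi, hPB⟩
  fib_baseChange := fun {P a x b} {p₁ p₂ f p} hPB hp => by
    obtain ⟨Q, qr, qi, hQ, hq1, hq2⟩ := cp_pullback C f p hp.1 hp.2
    have h₁ : p₁ = (hPB.isoIsPullback _ _ hQ).hom ≫ qr :=
      (hPB.isoIsPullback_hom_fst _ _ hQ).symm
    constructor
    · rw [h₁]
      exact C.fib_comp (C.fib_of_isIso _ (arrow_isIso_left _ inferInstance)) hq1
    · rw [h₁]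
      exact C.fib_comp (C.fib_of_isIso _ (arrow_isIso_right _ inferInstance)) hq2
  fib_toOne := fun f => by
    constructor
    · have h : ((arrowOneTerminal C).from f).left = C.one_isTerminal.from f.left :=
        C.one_isTerminal.hom_ext _ _
      rw [h]; exact C.fib_toOne _
    · have h : ((arrowOneTerminal C).from f).right = C.one_isTerminal.from f.right :=
        C.one_isTerminal.hom_ext _ _
      rw [h]; exact C.fib_toOne _

end ClanAux

namespace ClanAux

variable {E : Type u} [Category.{v} E] (C : Clan E)

/-- Construction of pullbacks along a Reedy fibration in `E^(1)`. -/
lemma reedy_pullback {x y z : FibArrow C} (v : y ⟶ z) (u : x ⟶ z)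
    (hu : ReedyFibrantSq C (FibArrow.homOf u).left (FibArrow.homOf u).right
      x.obj.hom z.obj.hom) :
    ∃ (P : FibArrow C) (pr : P ⟶ y) (pi : P ⟶ x),
      IsPullback pr pi v u ∧
      IsPullback (FibArrow.homOf pr) (FibArrow.homOf pi) (FibArrow.homOf v)
        (FibArrow.homOf u) ∧
      ReedyFibrantSq C (FibArrow.homOf pr).left (FibArrow.homOf pr).right
        P.obj.hom y.obj.hom := by
  obtain ⟨hur, hzb, hgap⟩ := hu
  -- pullback of u.right along z.hom, and the gap map of u
  obtain ⟨Pu, pu₁, pu₂, hPu⟩ := C.carrable (FibArrow.homOf u).right z.property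
  obtain ⟨gu, hgu₁, hgu₂, hgufib⟩ : ∃ gg : x.obj.left ⟶ Pu, gg ≫ pu₁ = x.obj.hom ∧
      gg ≫ pu₂ = (FibArrow.homOf u).left ∧ C.fib gg :=
    ⟨hPu.lift _ _ (Arrow.w (FibArrow.homOf u)).symm, hPu.lift_fst _ _ _, hPu.lift_snd _ _ _,
      hgap _ _ hPu _ (hPu.lift_fst _ _ _) (hPu.lift_snd _ _ _)⟩
  have hpu₂ : C.fib pu₂ := C.fib_baseChange hPu.flip hur
  -- right-hand pullback
  obtain ⟨P₁, a₁, b₁, hP1⟩ := C.carrable (FibArrow.homOf v).right hur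
  have ha₁ : C.fib a₁ := C.fib_baseChange hP1 hur
  -- middle pullback
  obtain ⟨M, m₁, m₂, hM⟩ := C.carrable (FibArrow.homOf v).left hpu₂
  -- top-left pullback
  obtain ⟨P₀, n₁, n₂, hN⟩ := C.carrable m₂ hgufib
  have hn₁ : C.fib n₁ := C.fib_baseChange hN hgufib
  -- left-hand component pullback square
  have hL : IsPullback (n₁ ≫ m₁) n₂ (FibArrow.homOf v).left (FibArrow.homOf u).left := by
    have h := (IsPullback.paste_vert hN.flip hM.flip).flip
    rwa [hgu₂] at h
  -- the comparison μ : M ⟶ P₁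
  have wmu : (m₁ ≫ y.obj.hom) ≫ (FibArrow.homOf v).right
      = (m₂ ≫ pu₁) ≫ (FibArrow.homOf u).right := by
    rw [Category.assoc, ← Arrow.w (FibArrow.homOf v), ← Category.assoc, hM.w,
      Category.assoc, ← hPu.w, ← Category.assoc]
  obtain ⟨μ, hμ₁, hμ₂⟩ : ∃ μ : M ⟶ P₁, μ ≫ a₁ = m₁ ≫ y.obj.hom ∧ μ ≫ b₁ = m₂ ≫ pu₁ :=
    ⟨hP1.lift _ _ wmu, hP1.lift_fst _ _ _, hP1.lift_snd _ _ _⟩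
  have hMpb : IsPullback μ m₁ a₁ y.obj.hom := by
    have rect : IsPullback (m₂ ≫ pu₁) m₁ (FibArrow.homOf u).right
        (y.obj.hom ≫ (FibArrow.homOf v).right) := by
      have h := IsPullback.paste_horiz hM.flip hPu
      rwa [Arrow.w (FibArrow.homOf v)] at h
    rw [← hμ₂] at rect
    exact IsPullback.of_right rect hμ₁ hP1.flip
  have hμfib : C.fib μ := C.fib_baseChange hMpb y.property
  -- the new object and the two projections
  have wpr : (n₁ ≫ m₁) ≫ y.obj.hom = (Arrow.mk (n₁ ≫ μ)).hom ≫ a₁ := by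
    show (n₁ ≫ m₁) ≫ y.obj.hom = (n₁ ≫ μ) ≫ a₁
    rw [Category.assoc, ← hμ₁, ← Category.assoc]
  have wpi : n₂ ≫ x.obj.hom = (Arrow.mk (n₁ ≫ μ)).hom ≫ b₁ := by
    show n₂ ≫ x.obj.hom = (n₁ ≫ μ) ≫ b₁
    rw [Category.assoc, hμ₂, ← Category.assoc, hN.w, Category.assoc, hgu₁]
  let Pf : FibArrow C := ⟨Arrow.mk (n₁ ≫ μ), C.fib_comp hn₁ hμfib⟩
  let pr : Pf ⟶ y := ObjectProperty.homMk (Arrow.homMk _ _ wpr)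
  let pi : Pf ⟶ x := ObjectProperty.homMk (Arrow.homMk _ _ wpi)
  have hArr : IsPullback (FibArrow.homOf pr) (FibArrow.homOf pi) (FibArrow.homOf v)
      (FibArrow.homOf u) := by
    refine arrow_isPullback ?_ hL hP1
    apply Arrow.hom_ext
    · exact hL.w
    · exact hP1.w
  have hFib : IsPullback pr pi v u :=
    IsPullback.of_map (ObjectProperty.ι _) (ObjectProperty.hom_ext _ hArr.w) hArr
  exact ⟨Pf, pr, pi, hFib, hArr,
    reedy_of_witness C (g := n₁) ha₁ y.property hMpb rfl rfl hn₁⟩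

end ClanAux

namespace ClanAux

variable {E : Type u} [Category.{v} E] (C : Clan E)

/-- Reedy fibrancy is stable under precomposition with an isomorphism. -/
lemma reedy_iso_comp {Q P y : FibArrow C} (e : Q ⟶ P) (he : IsIso e) (w : P ⟶ y)
    (hw : ReedyFibrantSq C (FibArrow.homOf w).left (FibArrow.homOf w).right
      P.obj.hom y.obj.hom) :
    ReedyFibrantSq C (FibArrow.homOf (e ≫ w)).left (FibArrow.homOf (e ≫ w)).right
      Q.obj.hom y.obj.hom := by
  obtain ⟨hwr, hyb, hgapw⟩ := hw
  have heArr : IsIso (FibArrow.homOf e) :=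
    ⟨FibArrow.homOf (inv e), by rw [FibArrow.homOf, FibArrow.homOf, ← ObjectProperty.FullSubcategory.comp_hom, IsIso.hom_inv_id, ObjectProperty.FullSubcategory.id_hom], by rw [FibArrow.homOf, FibArrow.homOf, ← ObjectProperty.FullSubcategory.comp_hom, IsIso.inv_hom_id, ObjectProperty.FullSubcategory.id_hom]⟩
  have hel : IsIso (FibArrow.homOf e).left := arrow_isIso_left _ heArr
  have her : IsIso (FibArrow.homOf e).right := arrow_isIso_right _ heArr
  obtain ⟨R, r₁, r₂, hR⟩ := C.carrable (FibArrow.homOf w).right y.property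
  obtain ⟨gw, hgw₁, hgw₂, hgwfib⟩ : ∃ gg : P.obj.left ⟶ R, gg ≫ r₁ = P.obj.hom ∧
      gg ≫ r₂ = (FibArrow.homOf w).left ∧ C.fib gg :=
    ⟨hR.lift _ _ (Arrow.w (FibArrow.homOf w)).symm, hR.lift_fst _ _ _, hR.lift_snd _ _ _,
      hgapw _ _ hR _ (hR.lift_fst _ _ _) (hR.lift_snd _ _ _)⟩
  have hR' : IsPullback (r₁ ≫ inv (FibArrow.homOf e).right) r₂
      ((FibArrow.homOf e).right ≫ (FibArrow.homOf w).right) y.obj.hom := by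
    have h := isPullback_shift hR (asIso (FibArrow.homOf e).right).symm
    simpa using h
  refine reedy_of_witness C (C.fib_comp (C.fib_of_isIso _ her) hwr) y.property hR'
    (g := (FibArrow.homOf e).left ≫ gw) ?_ ?_ (C.fib_comp (C.fib_of_isIso _ hel) hgwfib)
  · rw [Category.assoc, ← Category.assoc gw, hgw₁, ← Category.assoc,
      Arrow.w (FibArrow.homOf e), Category.assoc, IsIso.hom_inv_id, Category.comp_id]
  · show ((FibArrow.homOf e).left ≫ gw) ≫ r₂ = (FibArrow.homOf e).left ≫ (FibArrow.homOf w).left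
    rw [Category.assoc, hgw₂]

/-- Every map into the terminal object is a fibration. -/
lemma fib_to_one_any {X : E} (k : X ⟶ C.one) : C.fib k := by
  have h : k = C.one_isTerminal.from X := C.one_isTerminal.hom_ext _ _
  rw [h]; exact C.fib_toOne X

/-- Squares over the identity of the terminal object are Reedy fibrant. -/
lemma reedy_into_terminal {A₀ A₁ : E} (x : A₀ ⟶ A₁) (hx : C.fib x)
    (f₀ : A₀ ⟶ C.one) (f₁ : A₁ ⟶ C.one) : ReedyFibrantSq C f₀ f₁ x (𝟙 C.one) := by
  refine ⟨fib_to_one_any C f₁, C.fib_of_isIso _ inferInstance, ?_⟩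
  intro P p₁ p₂ hP gg hg₁ hg₂
  have hiso : IsIso p₁ := by
    refine ⟨hP.lift (𝟙 _) f₁ (by simp), ?_, ?_⟩
    · apply hP.hom_ext
      · simp
      · exact C.one_isTerminal.hom_ext _ _
    · simp
  have hgg : gg = x ≫ inv p₁ := by rw [← hg₁]; simp
  rw [hgg]; exact C.fib_comp hx (C.fib_of_isIso _ inferInstance)

/-- The Reedy clan structure on `E^(1)`. -/
def CR : Clan (FibArrow C) where
  fib := fun {f g} u => ReedyFibrantSq C (FibArrow.homOf u).left (FibArrow.homOf u).right
    f.obj.hom g.obj.hom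
  one := ⟨Arrow.mk (𝟙 C.one), show C.fib (𝟙 C.one) from C.fib_of_isIso _ inferInstance⟩
  one_isTerminal :=
    IsTerminal.ofUniqueHom (fun f => ObjectProperty.homMk ((arrowOneTerminal C).from f.obj))
      (fun f m => ObjectProperty.hom_ext _ ((arrowOneTerminal C).hom_ext _ _))
  fib_of_isIso := fun {f g} u hu => by
    have huArr : IsIso (FibArrow.homOf u) :=
      ⟨FibArrow.homOf (inv u), by rw [FibArrow.homOf, FibArrow.homOf, ← ObjectProperty.FullSubcategory.comp_hom, IsIso.hom_inv_id, ObjectProperty.FullSubcategory.id_hom], by rw [FibArrow.homOf, FibArrow.homOf, ← ObjectProperty.FullSubcategory.comp_hom, IsIso.inv_hom_id, ObjectProperty.FullSubcategory.id_hom]⟩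
    have hul : IsIso (FibArrow.homOf u).left := arrow_isIso_left _ huArr
    have hur : IsIso (FibArrow.homOf u).right := arrow_isIso_right _ huArr
    refine ⟨C.fib_of_isIso _ hur, g.property, ?_⟩
    intro P p₁ p₂ hP gg hg₁ hg₂
    have key : inv (FibArrow.homOf u).left ≫ f.obj.hom
        = g.obj.hom ≫ inv (FibArrow.homOf u).right := by
      rw [IsIso.inv_comp_eq, ← Category.assoc, Arrow.w (FibArrow.homOf u),
        Category.assoc, IsIso.hom_inv_id, Category.comp_id]
    have : IsIso gg := by
      refine ⟨p₂ ≫ inv (FibArrow.homOf u).left, ?_, ?_⟩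
      · rw [← Category.assoc, hg₂, IsIso.hom_inv_id]
      · apply hP.hom_ext
        · rw [Category.id_comp, Category.assoc, Category.assoc, hg₁, key,
            ← Category.assoc, ← hP.w, Category.assoc, IsIso.hom_inv_id, Category.comp_id]
        · rw [Category.id_comp, Category.assoc, Category.assoc, hg₂, IsIso.inv_hom_id,
            Category.comp_id]
    exact C.fib_of_isIso gg this
  fib_comp := fun {f g h} {u v} hu hv => by
    obtain ⟨hur, hgb, hgapu⟩ := hu
    obtain ⟨hvr, hhb, hgapv⟩ := hv
    obtain ⟨Pv, pv₁, pv₂, hPv⟩ := C.carrable (FibArrow.homOf v).right h.property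
    obtain ⟨gv, hgv₁, hgv₂, hgvfib⟩ : ∃ gg : g.obj.left ⟶ Pv, gg ≫ pv₁ = g.obj.hom ∧
        gg ≫ pv₂ = (FibArrow.homOf v).left ∧ C.fib gg :=
      ⟨hPv.lift _ _ (Arrow.w (FibArrow.homOf v)).symm, hPv.lift_fst _ _ _, hPv.lift_snd _ _ _,
        hgapv _ _ hPv _ (hPv.lift_fst _ _ _) (hPv.lift_snd _ _ _)⟩
    have hpv₁ : C.fib pv₁ := C.fib_baseChange hPv h.property
    obtain ⟨W, w₁, w₂, hW⟩ := C.carrable (FibArrow.homOf u).right hpv₁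
    have rect : IsPullback w₁ (w₂ ≫ pv₂)
        ((FibArrow.homOf u).right ≫ (FibArrow.homOf v).right) h.obj.hom :=
      hW.paste_vert hPv
    obtain ⟨Pu, pu₁, pu₂, hPu⟩ := C.carrable (FibArrow.homOf u).right g.property
    obtain ⟨gu, hgu₁, hgu₂, hgufib⟩ : ∃ gg : f.obj.left ⟶ Pu, gg ≫ pu₁ = f.obj.hom ∧
        gg ≫ pu₂ = (FibArrow.homOf u).left ∧ C.fib gg :=
      ⟨hPu.lift _ _ (Arrow.w (FibArrow.homOf u)).symm, hPu.lift_fst _ _ _, hPu.lift_snd _ _ _,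
        hgapu _ _ hPu _ (hPu.lift_fst _ _ _) (hPu.lift_snd _ _ _)⟩
    obtain ⟨cc, hc₁, hc₂⟩ : ∃ cc : Pu ⟶ W, cc ≫ w₁ = pu₁ ∧ cc ≫ w₂ = pu₂ ≫ gv := by
      have wc : pu₁ ≫ (FibArrow.homOf u).right = (pu₂ ≫ gv) ≫ pv₁ := by
        rw [Category.assoc, hgv₁]; exact hPu.w
      exact ⟨hW.lift _ _ wc, hW.lift_fst _ _ _, hW.lift_snd _ _ _⟩
    have hT : IsPullback cc pu₂ w₂ gv := by
      have s : IsPullback (cc ≫ w₁) pu₂ (FibArrow.homOf u).right (gv ≫ pv₁) := by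
        rw [hc₁, hgv₁]; exact hPu
      exact IsPullback.of_right s hc₂ hW
    have hcfib : C.fib cc := C.fib_baseChange hT hgvfib
    refine reedy_of_witness C (C.fib_comp hur hvr) h.property rect (g := gu ≫ cc) ?_ ?_
      (C.fib_comp hgufib hcfib)
    · rw [Category.assoc, hc₁, hgu₁]
    · show (gu ≫ cc) ≫ (w₂ ≫ pv₂) = (FibArrow.homOf u).left ≫ (FibArrow.homOf v).left
      rw [Category.assoc, ← Category.assoc cc, hc₂, Category.assoc, hgv₂,
        ← Category.assoc, hgu₂]
  carrable := fun {a b x} f p hp => by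
    obtain ⟨P, pr, pi, hFib, _, _⟩ := reedy_pullback C f p hp
    exact ⟨P, pr, pi, hFib⟩
  fib_baseChange := fun {P A X B} {p₁ p₂ f p} hGiven hp => by
    obtain ⟨Q, pr, pi, hFib, hArr, hReedy⟩ := reedy_pullback C f p hp
    have he : (hGiven.isoIsPullback _ _ hFib).hom ≫ pr = p₁ :=
      hGiven.isoIsPullback_hom_fst _ _ hFib
    have h := reedy_iso_comp C (hGiven.isoIsPullback _ _ hFib).hom inferInstance pr hReedy
    rwa [he] at h
  fib_toOne := fun f => reedy_into_terminal C f.obj.hom f.property _ _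

end ClanAux


/-- If `E` is a clan, then `E^(1)` (the category of fibrations of `E`
and commutative squares) is a clan whose fibrations are the Reedy fibrations, and
the inclusion `E^(1) ⥤ E^[1]` into the arrow category equipped with the pointwise
fibrations is a morphism of clans. -/
theorem fibArrow_clan_and_inclusion_clanMorphism
    {E : Type u} [Category.{v} E] (C : Clan E) :
    ∃ (CR : Clan (FibArrow C)) (CP : Clan (Arrow E)),
      (∀ {f g : Arrow E} (u : f ⟶ g), CP.fib u ↔ (C.fib u.left ∧ C.fib u.right)) ∧
      (∀ {f g : FibArrow C} (u : f ⟶ g),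
        CR.fib u ↔ ReedyFibrantSq C (FibArrow.homOf u).left (FibArrow.homOf u).right
          f.obj.hom g.obj.hom) ∧
      IsClanMorphism CR CP (ObjectProperty.ι _) := by
  refine ⟨ClanAux.CR C, ClanAux.CP C, fun u => Iff.rfl, fun u => by exact Iff.rfl, ?_, ?_, ?_⟩
  · -- map_fib
    intro a b u hu
    obtain ⟨hur, hbb, hgapu⟩ := hu
    obtain ⟨Pu, pu₁, pu₂, hPu⟩ := C.carrable (FibArrow.homOf u).right b.property
    obtain ⟨gu, hgu₁, hgu₂, hgufib⟩ : ∃ gg : a.obj.left ⟶ Pu, gg ≫ pu₁ = a.obj.hom ∧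
        gg ≫ pu₂ = (FibArrow.homOf u).left ∧ C.fib gg :=
      ⟨hPu.lift _ _ (Arrow.w (FibArrow.homOf u)).symm, hPu.lift_fst _ _ _, hPu.lift_snd _ _ _,
        hgapu _ _ hPu _ (hPu.lift_fst _ _ _) (hPu.lift_snd _ _ _)⟩
    have hpu₂ : C.fib pu₂ := C.fib_baseChange hPu.flip hur
    constructor
    · show C.fib (FibArrow.homOf u).left
      rw [← hgu₂]; exact C.fib_comp hgufib hpu₂
    · exact hur
  · -- map_isPullback
    intro P A X B p₁ p₂ f p hGiven hp
    obtain ⟨Q, pr, pi, hFib, hArr, _⟩ := ClanAux.reedy_pullback C f p hp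
    have heq₁ : (hGiven.isoIsPullback _ _ hFib).hom ≫ pr = p₁ :=
      hGiven.isoIsPullback_hom_fst _ _ hFib
    have heq₂ : (hGiven.isoIsPullback _ _ hFib).hom ≫ pi = p₂ :=
      hGiven.isoIsPullback_hom_snd _ _ hFib
    haveI hisoArr : IsIso (FibArrow.homOf (hGiven.isoIsPullback _ _ hFib).hom) :=
      ⟨FibArrow.homOf (hGiven.isoIsPullback _ _ hFib).inv,
        by rw [FibArrow.homOf, FibArrow.homOf, ← ObjectProperty.FullSubcategory.comp_hom, Iso.hom_inv_id, ObjectProperty.FullSubcategory.id_hom], by rw [FibArrow.homOf, FibArrow.homOf, ← ObjectProperty.FullSubcategory.comp_hom, Iso.inv_hom_id, ObjectProperty.FullSubcategory.id_hom]⟩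
    have res := ClanAux.isPullback_precomp_iso hArr
      (FibArrow.homOf (hGiven.isoIsPullback _ _ hFib).hom)
    rw [show FibArrow.homOf (hGiven.isoIsPullback _ _ hFib).hom ≫ FibArrow.homOf pr
          = FibArrow.homOf p₁ from congrArg InducedCategory.Hom.hom heq₁,
        show FibArrow.homOf (hGiven.isoIsPullback _ _ hFib).hom ≫ FibArrow.homOf pi
          = FibArrow.homOf p₂ from congrArg InducedCategory.Hom.hom heq₂] at res
    exact res
  · -- preserves_terminal
    exact ⟨ClanAux.arrowOneTerminal C⟩
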